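/- Let a₊, a₋ > 0 and γ > 1. Then lim_{ρ → 0⁺} F₂(ρ) = 0, where F₂(ρ) = ρ^{(γ-1)/(2(γ+1))} · I₁(ρ)/I₂(ρ) on ]0, a₋/a₊[. -/

import Mathlib

open Set MeasureTheory intervalIntegral Filter Topology

/-- for `γ > 1`, `F₂(ρ) → 0` as `ρ → 0⁺`. -/
theorem stmt_6 (ap am γ : ℝ) (hap : 0 < ap) (ham : 0 < am) (hγ : 1 < γ)
    (I₁ I₂ F₂ : ℝ → ℝ)
    (hI₁ : ∀ ρ : ℝ, I₁ ρ =
      ∫ ξ in (ap * (ρ + 1) / (ap + am))..1,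
        |ap - ap * ξ| ^ (-(1 : ℝ) / 2) * |ξ| ^ (-(γ / (γ + 1))))
    (hI₂ : ∀ ρ : ℝ, I₂ ρ =
      ∫ ξ in (ap / am)..(ap / (ap + am) * ((ρ + 1) / ρ)),
        |am * ξ - ap| ^ (-(1 : ℝ) / 2) * |ξ| ^ (-(γ / (γ + 1))))
    (hF₂ : ∀ ρ : ℝ, F₂ ρ = ρ ^ ((γ - 1) / (2 * (γ + 1))) * (I₁ ρ / I₂ ρ)) :
    Tendsto F₂ (𝓝[>] (0 : ℝ)) (𝓝 0) := by
  have hS : (0:ℝ) < ap + am := by linarith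
  set q : ℝ := γ / (γ + 1) with hq
  set α : ℝ := (γ - 1) / (2 * (γ + 1)) with hα
  have hαpos : 0 < α := by
    apply div_pos <;> linarith
  set L : ℝ := ap / (ap + am) with hLdef
  have hL0 : 0 < L := div_pos hap hS
  have hL1 : L < 1 := (div_lt_one hS).2 (by linarith)
  set g : ℝ → ℝ := fun ξ => |ap - ap * ξ| ^ (-(1 : ℝ) / 2) * |ξ| ^ (-q) with hgdef
  set h : ℝ → ℝ := fun ξ => |am * ξ - ap| ^ (-(1 : ℝ) / 2) * |ξ| ^ (-q) with hhdef
  have hg0 : ∀ ξ, 0 ≤ g ξ := fun ξ =>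
    mul_nonneg (Real.rpow_nonneg (abs_nonneg _) _) (Real.rpow_nonneg (abs_nonneg _) _)
  have hh0 : ∀ ξ, 0 ≤ h ξ := fun ξ =>
    mul_nonneg (Real.rpow_nonneg (abs_nonneg _) _) (Real.rpow_nonneg (abs_nonneg _) _)
  -- integrability of g on [L, 1]
  have hgInt : IntervalIntegrable g volume L 1 := by
    have base : IntervalIntegrable (fun x : ℝ => x ^ (-(1:ℝ)/2)) volume 0 (1 - L) :=
      intervalIntegral.intervalIntegrable_rpow' (by norm_num)
    have c1 : IntervalIntegrable (fun ξ : ℝ => (1 - ξ) ^ (-(1:ℝ)/2)) volume L 1 := by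
      have := base.comp_sub_left 1
      simpa using this.symm
    have hcont : ContinuousOn (fun ξ : ℝ => |ξ| ^ (-q)) (uIcc L 1) := by
      apply ContinuousOn.rpow_const (continuous_abs.continuousOn)
      intro x hx
      rw [uIcc_of_le hL1.le] at hx
      exact Or.inl (by simpa [abs_ne_zero] using (hL0.trans_le hx.1).ne')
    have c2 := (c1.mul_continuousOn hcont).const_mul (ap ^ (-(1:ℝ)/2))
    apply c2.congr_ae
    have hmeas : MeasurableSet (Set.uIoc L 1) := measurableSet_uIoc
    filter_upwards [ae_restrict_mem hmeas] with ξ hξ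
    rw [uIoc_of_le hL1.le] at hξ
    have h1 : (0:ℝ) ≤ 1 - ξ := by linarith [hξ.2]
    have h2 : |ap - ap * ξ| = ap * (1 - ξ) := by
      rw [abs_of_nonneg (by nlinarith)]; ring
    simp only [hgdef, h2, Real.mul_rpow hap.le h1]
    ring
  -- integrability of h on [ap/am, b] for any b ≥ ap/am
  have hhInt : ∀ b : ℝ, ap / am ≤ b → IntervalIntegrable h volume (ap / am) b := by
    intro b hb
    have base : IntervalIntegrable (fun x : ℝ => x ^ (-(1:ℝ)/2)) volume 0 (am * b - ap) :=
      intervalIntegral.intervalIntegrable_rpow' (by norm_num)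
    have c0 := base.comp_sub_right ap
    have c1 := c0.comp_mul_right (c := am)
    simp only [zero_add] at c1
    have c1' : IntervalIntegrable (fun ξ : ℝ => (ξ * am - ap) ^ (-(1:ℝ)/2)) volume
        (ap / am) b := by
      have he : (am * b - ap + ap) / am = b := by field_simp; ring
      rwa [he] at c1
    have hcont : ContinuousOn (fun ξ : ℝ => |ξ| ^ (-q)) (uIcc (ap / am) b) := by
      apply ContinuousOn.rpow_const (continuous_abs.continuousOn)
      intro x hx
      rw [uIcc_of_le hb] at hx
      have : 0 < x := lt_of_lt_of_le (div_pos hap ham) hx.1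
      exact Or.inl (by simpa [abs_ne_zero] using this.ne')
    apply (c1'.mul_continuousOn hcont).congr_ae
    have hmeas : MeasurableSet (Set.uIoc (ap / am) b) := measurableSet_uIoc
    filter_upwards [ae_restrict_mem hmeas] with ξ hξ
    rw [uIoc_of_le hb] at hξ
    have h1 : 0 ≤ am * ξ - ap := by
      have := hξ.1
      rw [div_lt_iff₀ ham] at this
      nlinarith
    have h2 : |am * ξ - ap| = ξ * am - ap := by rw [abs_of_nonneg h1]; ring
    simp only [hhdef, h2]
  set C₁ : ℝ := ∫ ξ in L..1, g ξ with hC₁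
  set c : ℝ := ap / am + 1 with hcdef
  have hamc : ap / am < c := by simp [hcdef]
  set C₂ : ℝ := ∫ ξ in (ap/am)..c, h ξ with hC₂
  have hC₂pos : 0 < C₂ := by
    apply intervalIntegral_pos_of_pos_on (hhInt c hamc.le) _ hamc
    intro x hx
    have hx1 : 0 < am * x - ap := by
      have := hx.1; rw [div_lt_iff₀ ham] at this; nlinarith
    have hx2 : 0 < x := lt_trans (div_pos hap ham) hx.1
    exact mul_pos (Real.rpow_pos_of_pos (abs_pos.2 hx1.ne') _)
      (Real.rpow_pos_of_pos (abs_pos.2 hx2.ne') _)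
  have hC₁nonneg : 0 ≤ C₁ :=
    intervalIntegral.integral_nonneg hL1.le (fun x _ => hg0 x)
  set δ : ℝ := min (am / ap) (L / c) with hδdef
  have hcpos : (0:ℝ) < c := lt_trans (div_pos hap ham) hamc
  have hδpos : 0 < δ := lt_min (div_pos ham hap) (div_pos hL0 hcpos)
  -- main eventual bounds
  have hbound : ∀ ρ ∈ Ioo (0:ℝ) δ, 0 ≤ F₂ ρ ∧ F₂ ρ ≤ ρ ^ α * (C₁ / C₂) := by
    intro ρ hρ
    obtain ⟨hρ0, hρδ⟩ := hρ
    have hρam : ρ < am / ap := lt_of_lt_of_le hρδ (min_le_left _ _)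
    have hρLc : ρ < L / c := lt_of_lt_of_le hρδ (min_le_right _ _)
    set ℓ : ℝ := ap * (ρ + 1) / (ap + am) with hℓdef
    have hLℓ : L ≤ ℓ := by
      apply div_le_div_of_nonneg_right _ hS.le
      nlinarith
    have hℓ1 : ℓ ≤ 1 := by
      rw [div_le_one hS]
      rw [lt_div_iff₀ hap] at hρam
      nlinarith
    have hI₁nonneg : 0 ≤ I₁ ρ := by
      rw [hI₁ ρ]
      exact intervalIntegral.integral_nonneg hℓ1 (fun x _ => hg0 x)
    have hI₁le : I₁ ρ ≤ C₁ := by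
      have hsub1 : IntervalIntegrable g volume L ℓ :=
        hgInt.mono_set (by rw [uIcc_of_le hLℓ, uIcc_of_le hL1.le]
                           exact Icc_subset_Icc_right hℓ1)
      have hsub2 : IntervalIntegrable g volume ℓ 1 :=
        hgInt.mono_set (by rw [uIcc_of_le hℓ1, uIcc_of_le hL1.le]
                           exact Icc_subset_Icc_left hLℓ)
      have hsplit : C₁ = (∫ ξ in L..ℓ, g ξ) + ∫ ξ in ℓ..1, g ξ :=
        (intervalIntegral.integral_add_adjacent_intervals hsub1 hsub2).symm
      have hfirst : 0 ≤ ∫ ξ in L..ℓ, g ξ :=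
        intervalIntegral.integral_nonneg hLℓ (fun x _ => hg0 x)
      have : I₁ ρ = ∫ ξ in ℓ..1, g ξ := hI₁ ρ
      rw [this, hsplit]
      linarith
    set u : ℝ := ap / (ap + am) * ((ρ + 1) / ρ) with hudef
    have hcu : c ≤ u := by
      rw [lt_div_iff₀ hcpos] at hρLc
      have heq : u * ρ = L * (ρ + 1) := by
        rw [hudef, ← hLdef]; field_simp
      have h4 : c * ρ < u * ρ := by
        rw [heq]; nlinarith [mul_pos hL0 hρ0]
      exact le_of_lt (lt_of_mul_lt_mul_right h4 hρ0.le)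
    have hamu : ap / am ≤ u := le_trans hamc.le hcu
    have hI₂ge : C₂ ≤ I₂ ρ := by
      have hsub1 : IntervalIntegrable h volume (ap/am) c := hhInt c hamc.le
      have hsub2 : IntervalIntegrable h volume c u :=
        (hhInt u hamu).mono_set (by rw [uIcc_of_le hcu, uIcc_of_le hamu]
                                    exact Icc_subset_Icc_left hamc.le)
      have hsplit : I₂ ρ = C₂ + ∫ ξ in c..u, h ξ := by
        rw [hI₂ ρ, ← intervalIntegral.integral_add_adjacent_intervals hsub1 hsub2]
      have hsecond : 0 ≤ ∫ ξ in c..u, h ξ :=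
        intervalIntegral.integral_nonneg hcu (fun x _ => hh0 x)
      linarith
    have hI₂pos : 0 < I₂ ρ := lt_of_lt_of_le hC₂pos hI₂ge
    have hρα : 0 ≤ ρ ^ α := Real.rpow_nonneg hρ0.le _
    have hdiv : I₁ ρ / I₂ ρ ≤ C₁ / C₂ := div_le_div₀ hC₁nonneg hI₁le hC₂pos hI₂ge
    constructor
    · rw [hF₂ ρ]
      exact mul_nonneg hρα (div_nonneg hI₁nonneg hI₂pos.le)
    · rw [hF₂ ρ]
      exact mul_le_mul_of_nonneg_left hdiv hρα
  -- squeeze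
  have hmem : Ioo (0:ℝ) δ ∈ 𝓝[>] (0:ℝ) := Ioo_mem_nhdsGT_of_mem ⟨le_refl 0, hδpos⟩
  have htend : Tendsto (fun ρ : ℝ => ρ ^ α * (C₁ / C₂)) (𝓝[>] (0:ℝ)) (𝓝 0) := by
    have t1 : Tendsto (fun ρ : ℝ => ρ ^ α) (𝓝[>] (0:ℝ)) (𝓝 0) := by
      have := (Real.continuousAt_rpow_const 0 α (Or.inr hαpos.le)).tendsto
      rw [Real.zero_rpow hαpos.ne'] at this
      exact this.mono_left nhdsWithin_le_nhds
    simpa using t1.mul_const (C₁ / C₂)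
  apply squeeze_zero' (eventually_of_mem hmem fun ρ hρ => (hbound ρ hρ).1)
    (eventually_of_mem hmem fun ρ hρ => (hbound ρ hρ).2) htend
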